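/- arXiv:2605.05086 — 6 statements merged into one kernel-verified Lean document; each statement's English description precedes it below -/
import Mathlib

section
/- Piecewise form of the penalty for a positive coefficient and a violated constraint: if a_{ij} > 0 and ȳ_i > b_i (equivalently x̄_j > t_{ij}), then for every candidate value x̂_j ∈ ℝ, p_{ij}(x̂_j, x̄) = w_i if x̂_j ≤ t_{ij}; p_{ij}(x̂_j, x̄) = w_i/2 if t_{ij} < x̂_j < x̄_j; p_{ij}(x̂_j, x̄) = 0 if x̂_j = x̄_j; and p_{ij}(x̂_j, x̄) = −w_i/2 if x̂_j > x̄_j. -/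
open Finset

/-- Activity of constraint `i` at the incumbent point `xbar`. -/
noncomputable def activity {m n : ℕ} (a : Fin m → Fin n → ℝ) (xbar : Fin n → ℝ)
    (i : Fin m) : ℝ :=
  ∑ k, a i k * xbar k

/-- Moved activity of constraint `i` when variable `j` takes candidate value `xhat`. -/
noncomputable def movedActivity {m n : ℕ} (a : Fin m → Fin n → ℝ) (xbar : Fin n → ℝ)
    (j : Fin n) (i : Fin m) (xhat : ℝ) : ℝ :=
  (∑ k ∈ Finset.univ.erase j, a i k * xbar k) + a i j * xhat

/-- Penalty of moving variable `j` from `xbar j` to `xhat` w.r.t. constraint `i`. -/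
noncomputable def penalty {m n : ℕ} (a : Fin m → Fin n → ℝ) (b w : Fin m → ℝ)
    (xbar : Fin n → ℝ) (j : Fin n) (i : Fin m) (xhat : ℝ) : ℝ :=
  if activity a xbar i ≤ b i ∧ movedActivity a xbar j i xhat > b i then -w i
  else if activity a xbar i > b i ∧ movedActivity a xbar j i xhat ≤ b i then w i
  else if activity a xbar i > b i ∧ movedActivity a xbar j i xhat > b i ∧
      movedActivity a xbar j i xhat < activity a xbar i then w i / 2
  else if activity a xbar i > b i ∧ movedActivity a xbar j i xhat > b i ∧
      movedActivity a xbar j i xhat > activity a xbar i then -w i / 2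
  else 0

/-- Score of moving variable `j` to candidate value `xhat`. -/
noncomputable def score {m n : ℕ} (a : Fin m → Fin n → ℝ) (b w : Fin m → ℝ)
    (xbar : Fin n → ℝ) (j : Fin n) (xhat : ℝ) : ℝ :=
  ∑ i, penalty a b w xbar j i xhat

/-- Breakpoint of constraint `i` for variable `j` (meaningful when `a i j ≠ 0`). -/
noncomputable def breakpoint {m n : ℕ} (a : Fin m → Fin n → ℝ) (b : Fin m → ℝ)
    (xbar : Fin n → ℝ) (j : Fin n) (i : Fin m) : ℝ :=
  (b i - ∑ k ∈ Finset.univ.erase j, a i k * xbar k) / a i j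

/-- Piecewise form of the penalty for a positive coefficient and a violated constraint. -/
theorem penalty_piecewise_pos_violated
    {m n : ℕ} (a : Fin m → Fin n → ℝ) (b w : Fin m → ℝ)
    (xbar : Fin n → ℝ) (j : Fin n) (i : Fin m)
    (hw : ∀ i, 0 ≤ w i) (ha : a i j > 0) (hviol : activity a xbar i > b i) :
    xbar j > breakpoint a b xbar j i ∧
    ∀ xhat : ℝ,
      (xhat ≤ breakpoint a b xbar j i → penalty a b w xbar j i xhat = w i) ∧
      (breakpoint a b xbar j i < xhat → xhat < xbar j →
        penalty a b w xbar j i xhat = w i / 2) ∧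
      (xhat = xbar j → penalty a b w xbar j i xhat = 0) ∧
      (xhat > xbar j → penalty a b w xbar j i xhat = -w i / 2) := by
  have hact : activity a xbar i = movedActivity a xbar j i (xbar j) := by
    exact (Finset.sum_erase_add _ _ (Finset.mem_univ j)).symm
  set S := ∑ k ∈ Finset.univ.erase j, a i k * xbar k with hS
  have hmv : ∀ x : ℝ, movedActivity a xbar j i x = S + a i j * x := fun x => rfl
  have hbp : breakpoint a b xbar j i = (b i - S) / a i j := rfl
  have hiff : ∀ x : ℝ, movedActivity a xbar j i x ≤ b i ↔ x ≤ breakpoint a b xbar j i := by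
    intro x
    rw [hmv, hbp, le_div_iff₀ ha]
    constructor <;> intro h <;> nlinarith
  have hiff' : ∀ x : ℝ, b i < movedActivity a xbar j i x ↔ breakpoint a b xbar j i < x := by
    intro x
    rw [← not_le, ← not_le, not_iff_not]
    exact hiff x
  have hmono : ∀ x y : ℝ, x < y → movedActivity a xbar j i x < movedActivity a xbar j i y := by
    intro x y hxy; rw [hmv, hmv]; nlinarith
  have hbj : xbar j > breakpoint a b xbar j i := by
    exact (hiff' _).1 (hact ▸ hviol)
  refine ⟨hbj, fun xhat => ⟨?_, ?_, ?_, ?_⟩⟩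
  · intro h
    have h1 : movedActivity a xbar j i xhat ≤ b i := (hiff xhat).2 h
    rw [penalty, if_neg (by push_neg; intro h2; linarith), if_pos ⟨hviol, h1⟩]
  · intro h1 h2
    have hb : b i < movedActivity a xbar j i xhat := (hiff' xhat).2 h1
    have hlt : movedActivity a xbar j i xhat < activity a xbar i := by
      rw [hact]; exact hmono _ _ h2
    rw [penalty, if_neg (by push_neg; intro h3; linarith), if_neg (by push_neg; intro _; linarith),
      if_pos ⟨hviol, hb, hlt⟩]
  · intro h; subst h
    have hb : b i < movedActivity a xbar j i (xbar j) := hact ▸ hviol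
    rw [penalty, if_neg (by push_neg; intro h3; linarith), if_neg (by push_neg; intro _; linarith),
      if_neg (by push_neg; intro _ _; rw [hact]), if_neg (by push_neg; intro _ _; rw [hact])]
  · intro h
    have hgt : activity a xbar i < movedActivity a xbar j i xhat := by
      rw [hact]; exact hmono _ _ h
    have hb : b i < movedActivity a xbar j i xhat := lt_trans hviol hgt
    rw [penalty, if_neg (by push_neg; intro h3; linarith), if_neg (by push_neg; intro _; linarith),
      if_neg (by push_neg; intro _ _; linarith), if_pos ⟨hviol, hb, hgt⟩]
end

section
/- Each constraint's penalty is maximized at its own breakpoint: if a_{ij} ≠ 0, then for every candidate value x̂_j ∈ ℝ one has p_{ij}(x̂_j, x̄) ≤ p_{ij}(t_{ij}, x̄). -/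
open Finset

/-- Each constraint's penalty is maximized at its own breakpoint. -/
theorem penalty_le_penalty_breakpoint
    {m n : ℕ} (a : Fin m → Fin n → ℝ) (b w : Fin m → ℝ)
    (xbar : Fin n → ℝ) (j : Fin n) (i : Fin m)
    (hw : ∀ i, 0 ≤ w i) (ha : a i j ≠ 0) :
    ∀ xhat : ℝ,
      penalty a b w xbar j i xhat ≤ penalty a b w xbar j i (breakpoint a b xbar j i) := by
  intro xhat
  have hmb : movedActivity a xbar j i (breakpoint a b xbar j i) = b i := by
    unfold movedActivity breakpoint
    field_simp
    ring
  unfold penalty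
  rw [hmb]
  have := hw i
  simp only [gt_iff_lt, le_refl, and_true, lt_self_iff_false, false_and, and_false, if_false]
  split_ifs <;> linarith
end

section
/- The score of a best shift move is a step function whose steps occur only at breakpoints and at the incumbent value: if x̂_j¹ and x̂_j² both lie in an open interval (u, v) ⊆ ℝ that contains neither the incumbent value x̄_j nor any breakpoint t_{ij} of a constraint i with a_{ij} ≠ 0, then s_j(x̂_j¹, x̄) = s_j(x̂_j², x̄). -/
open Finset

/-- On an interval avoiding `t`, all comparisons of `A * x` against `A * t` are constant. -/
lemma cmp_iff (A t x1 x2 u v : ℝ) (hA : A ≠ 0) (ht : t ≤ u ∨ v ≤ t)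
    (h1 : u < x1 ∧ x1 < v) (h2 : u < x2 ∧ x2 < v) :
    (A * x1 ≤ A * t ↔ A * x2 ≤ A * t) ∧ (A * t < A * x1 ↔ A * t < A * x2) ∧
    (A * x1 < A * t ↔ A * x2 < A * t) := by
  obtain ⟨h1l, h1r⟩ := h1
  obtain ⟨h2l, h2r⟩ := h2
  rcases hA.lt_or_gt with h | h <;> rcases ht with ht | ht <;>
    refine ⟨⟨fun h' => ?_, fun h' => ?_⟩, ⟨fun h' => ?_, fun h' => ?_⟩,
      ⟨fun h' => ?_, fun h' => ?_⟩⟩ <;>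
    nlinarith

/-- The score is a step function with steps only at breakpoints and at the incumbent:
it is constant on any open interval containing neither the incumbent value nor any breakpoint. -/
theorem score_constant_on_breakpoint_free_interval
    {m n : ℕ} (a : Fin m → Fin n → ℝ) (b w : Fin m → ℝ)
    (xbar : Fin n → ℝ) (j : Fin n) (hw : ∀ i, 0 ≤ w i)
    (u v : ℝ) (hxbar : xbar j ∉ Set.Ioo u v)
    (hbp : ∀ i : Fin m, a i j ≠ 0 → breakpoint a b xbar j i ∉ Set.Ioo u v)
    (xhat₁ xhat₂ : ℝ) (h₁ : xhat₁ ∈ Set.Ioo u v) (h₂ : xhat₂ ∈ Set.Ioo u v) :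
    score a b w xbar j xhat₁ = score a b w xbar j xhat₂ := by
  refine Finset.sum_congr rfl fun i _ => ?_
  by_cases hA : a i j = 0
  · simp [penalty, movedActivity, hA]
  · set A := a i j with hAdef
    set c := ∑ k ∈ Finset.univ.erase j, a i k * xbar k with hc
    set t := breakpoint a b xbar j i with htdef
    have hact : activity a xbar i = c + A * xbar j := by
      rw [activity, ← Finset.sum_erase_add _ _ (Finset.mem_univ j)]
    have hm : ∀ x : ℝ, movedActivity a xbar j i x = c + A * x := fun x => rfl
    have htin : t ≤ u ∨ v ≤ t := by
      have := hbp i hA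
      simp only [Set.mem_Ioo, not_and_or, not_lt] at this
      exact this
    have hxin : xbar j ≤ u ∨ v ≤ xbar j := by
      simp only [Set.mem_Ioo, not_and_or, not_lt] at hxbar
      exact hxbar
    have htA : A * t = b i - c := by
      rw [htdef, breakpoint, ← hc, ← hAdef]
      field_simp
    obtain ⟨K1, K2, K3⟩ := cmp_iff A t xhat₁ xhat₂ u v hA htin ⟨h₁.1, h₁.2⟩ ⟨h₂.1, h₂.2⟩
    obtain ⟨L1, L2, L3⟩ := cmp_iff A (xbar j) xhat₁ xhat₂ u v hA hxin ⟨h₁.1, h₁.2⟩ ⟨h₂.1, h₂.2⟩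
    have e1 : ∀ x : ℝ, (c + A * x ≤ b i ↔ A * x ≤ A * t) := fun x => by
      constructor <;> intro h <;> linarith
    have e2 : ∀ x : ℝ, (b i < c + A * x ↔ A * t < A * x) := fun x => by
      constructor <;> intro h <;> linarith
    have e3 : ∀ x : ℝ, (c + A * x < activity a xbar i ↔ A * x < A * xbar j) := fun x => by
      rw [hact]; constructor <;> intro h <;> linarith
    have e4 : ∀ x : ℝ, (activity a xbar i < c + A * x ↔ A * xbar j < A * x) := fun x => by
      rw [hact]; constructor <;> intro h <;> linarith
    have hle : movedActivity a xbar j i xhat₁ ≤ b i ↔ movedActivity a xbar j i xhat₂ ≤ b i := by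
      rw [hm, hm, e1, e1, K1]
    have hlt : b i < movedActivity a xbar j i xhat₁ ↔ b i < movedActivity a xbar j i xhat₂ := by
      rw [hm, hm, e2, e2, K2]
    have h3 : movedActivity a xbar j i xhat₁ < activity a xbar i ↔
        movedActivity a xbar j i xhat₂ < activity a xbar i := by
      rw [hm, hm, e3, e3, L3]
    have h4 : activity a xbar i < movedActivity a xbar j i xhat₁ ↔
        activity a xbar i < movedActivity a xbar j i xhat₂ := by
      rw [hm, hm, e4, e4, L2]
    simp only [penalty, gt_iff_lt, hle, hlt, h3, h4]
end

section
/- Eventual value of the penalty far to the left (the β accumulation of the best-shift algorithm): if a_{ij} ≠ 0, there exists M ∈ ℝ such that for every candidate value x̂_j < M, p_{ij}(x̂_j, x̄) equals: w_i if a_{ij} > 0 and ȳ_i > b_i; 0 if a_{ij} > 0 and ȳ_i ≤ b_i; −w_i if a_{ij} < 0 and ȳ_i ≤ b_i; and −w_i/2 if a_{ij} < 0 and ȳ_i > b_i. -/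
open Finset

/-- Eventual value of the penalty far to the left (the β accumulation of
the best-shift algorithm). -/
theorem penalty_eventually_left
    {m n : ℕ} (a : Fin m → Fin n → ℝ) (b w : Fin m → ℝ)
    (xbar : Fin n → ℝ) (j : Fin n) (i : Fin m)
    (hw : ∀ i, 0 ≤ w i) (ha : a i j ≠ 0) :
    ∃ M : ℝ, ∀ xhat : ℝ, xhat < M →
      (a i j > 0 → activity a xbar i > b i → penalty a b w xbar j i xhat = w i) ∧
      (a i j > 0 → activity a xbar i ≤ b i → penalty a b w xbar j i xhat = 0) ∧
      (a i j < 0 → activity a xbar i ≤ b i → penalty a b w xbar j i xhat = -w i) ∧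
      (a i j < 0 → activity a xbar i > b i → penalty a b w xbar j i xhat = -w i / 2) := by
  refine ⟨min (breakpoint a b xbar j i) (xbar j), fun xhat hx => ?_⟩
  have hbp : xhat < breakpoint a b xbar j i := lt_of_lt_of_le hx (min_le_left _ _)
  have hxb : xhat < xbar j := lt_of_lt_of_le hx (min_le_right _ _)
  rw [breakpoint] at hbp
  set s := ∑ k ∈ Finset.univ.erase j, a i k * xbar k with hs
  have hmove : movedActivity a xbar j i xhat = s + a i j * xhat := rfl
  refine ⟨?_, ?_, ?_, ?_⟩
  · intro hpos hact
    have h1 : a i j * xhat < b i - s := by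
      have h2 := (lt_div_iff₀ hpos).mp hbp
      nlinarith
    have hle : movedActivity a xbar j i xhat ≤ b i := by rw [hmove]; linarith
    simp only [penalty]
    rw [if_neg (by push_neg; intro h; linarith), if_pos ⟨hact, hle⟩]
  · intro hpos hact
    have h1 : a i j * xhat < b i - s := by
      have h2 := (lt_div_iff₀ hpos).mp hbp
      nlinarith
    have hle : movedActivity a xbar j i xhat ≤ b i := by rw [hmove]; linarith
    simp only [penalty]
    rw [if_neg (by push_neg; intro h; linarith),
        if_neg (by push_neg; intro h; linarith),
        if_neg (by push_neg; intro h; linarith),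
        if_neg (by push_neg; intro h; linarith)]
  · intro hneg hact
    have h1 : b i - s < a i j * xhat := by
      have h2 := (lt_div_iff_of_neg hneg).mp hbp
      nlinarith
    have hgt : movedActivity a xbar j i xhat > b i := by rw [hmove]; linarith
    simp only [penalty]
    rw [if_pos ⟨hact, hgt⟩]
  · intro hneg hact
    have h1 : b i - s < a i j * xhat := by
      have h2 := (lt_div_iff_of_neg hneg).mp hbp
      nlinarith
    have hgt : movedActivity a xbar j i xhat > b i := by rw [hmove]; linarith
    have hmono : activity a xbar i < movedActivity a xbar j i xhat := by
      have hsplit : activity a xbar i = s + a i j * xbar j := by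
        rw [hs, activity, ← Finset.add_sum_erase _ _ (Finset.mem_univ j)]
        ring
      rw [hmove, hsplit]
      nlinarith
    simp only [penalty]
    rw [if_neg (by push_neg; intro h; linarith),
        if_neg (by push_neg; intro h; linarith),
        if_neg (by push_neg; intro h _; linarith),
        if_pos ⟨hact, hgt, hmono⟩]
end

section
/- Finite candidate set for the continuous best shift move: let l_j ≤ u_j be variable bounds with l_j ≤ x̄_j ≤ u_j, and let F := ({t_{ij} : a_{ij} ≠ 0} ∩ [l_j, u_j]) ∪ {l_j, u_j, x̄_j}. Then the score attains its maximum over [l_j, u_j] at a point of F; that is, there exists z ∈ F such that s_j(z, x̄) ≥ s_j(x̂_j, x̄) for every x̂_j ∈ [l_j, u_j]. -/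
open Finset

lemma penalty_le_of_moved_le {m n : ℕ} (a : Fin m → Fin n → ℝ) (b w : Fin m → ℝ)
    (xbar : Fin n → ℝ) (j : Fin n) (i : Fin m) (hw : 0 ≤ w i) (x1 x2 : ℝ)
    (h : movedActivity a xbar j i x1 ≤ b i) :
    penalty a b w xbar j i x2 ≤ penalty a b w xbar j i x1 := by
  rcases le_or_gt (activity a xbar i) (b i) with hbar | hbar
  · have h1 : penalty a b w xbar j i x1 = 0 := by
      unfold penalty; split_ifs with c1 c2 c3 c4
      · exact absurd c1.2 (not_lt.2 h)
      · exact absurd c2.1 (not_lt.2 hbar)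
      · exact absurd c3.1 (not_lt.2 hbar)
      · exact absurd c4.1 (not_lt.2 hbar)
      · rfl
    have h2 : penalty a b w xbar j i x2 ≤ 0 := by
      unfold penalty; split_ifs with c1 c2 c3 c4
      · linarith
      · exact absurd c2.1 (not_lt.2 hbar)
      · exact absurd c3.1 (not_lt.2 hbar)
      · exact absurd c4.1 (not_lt.2 hbar)
      · exact le_refl 0
    linarith
  · have h1 : penalty a b w xbar j i x1 = w i := by
      unfold penalty; split_ifs with c1 c2 c3 c4
      · exact absurd c1.2 (not_lt.2 h)
      · rfl
      · exact absurd ⟨hbar, h⟩ c2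
      · exact absurd ⟨hbar, h⟩ c2
      · exact absurd ⟨hbar, h⟩ c2
    have h2 : penalty a b w xbar j i x2 ≤ w i := by
      unfold penalty; split_ifs <;> linarith
    linarith

lemma penalty_congr {m n : ℕ} (a : Fin m → Fin n → ℝ) (b w : Fin m → ℝ)
    (xbar : Fin n → ℝ) (j : Fin n) (i : Fin m) (x1 x2 : ℝ)
    (h1 : b i < movedActivity a xbar j i x1 ↔ b i < movedActivity a xbar j i x2)
    (h2 : movedActivity a xbar j i x1 < activity a xbar i ↔
        movedActivity a xbar j i x2 < activity a xbar i)
    (h3 : activity a xbar i < movedActivity a xbar j i x1 ↔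
        activity a xbar i < movedActivity a xbar j i x2) :
    penalty a b w xbar j i x1 = penalty a b w xbar j i x2 := by
  have h4 : movedActivity a xbar j i x1 ≤ b i ↔ movedActivity a xbar j i x2 ≤ b i := by
    rw [← not_lt, ← not_lt, h1]
  simp only [penalty, gt_iff_lt, h1, h2, h3, h4]

lemma sign_pos_iff (A x y : ℝ) (h : (0 < x ∧ 0 < y) ∨ (x < 0 ∧ y < 0)) :
    (0 < A * x ↔ 0 < A * y) := by
  rw [mul_pos_iff, mul_pos_iff]
  rcases h with ⟨hx, hy⟩ | ⟨hx, hy⟩ <;>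
    constructor <;> rintro (⟨h1, h2⟩ | ⟨h1, h2⟩) <;> first
      | (left; exact ⟨by linarith, by linarith⟩)
      | (right; exact ⟨by linarith, by linarith⟩)
      | (exfalso; linarith)

lemma sign_neg_iff (A x y : ℝ) (h : (0 < x ∧ 0 < y) ∨ (x < 0 ∧ y < 0)) :
    (A * x < 0 ↔ A * y < 0) := by
  rw [mul_neg_iff, mul_neg_iff]
  rcases h with ⟨hx, hy⟩ | ⟨hx, hy⟩ <;>
    constructor <;> rintro (⟨h1, h2⟩ | ⟨h1, h2⟩) <;> first
      | (left; exact ⟨by linarith, by linarith⟩)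
      | (right; exact ⟨by linarith, by linarith⟩)
      | (exfalso; linarith)

/-- Finite candidate set for the continuous best shift move: the score attains its
maximum over `[l, u]` at a breakpoint within the bounds, at a bound, or at the incumbent. -/
theorem best_shift_attained_on_candidate_set
    {m n : ℕ} (a : Fin m → Fin n → ℝ) (b w : Fin m → ℝ)
    (xbar : Fin n → ℝ) (j : Fin n) (hw : ∀ i, 0 ≤ w i)
    (l u : ℝ) (hlu : l ≤ u) (hl : l ≤ xbar j) (hu : xbar j ≤ u) :
    ∃ z ∈ ({t : ℝ | ∃ i : Fin m, a i j ≠ 0 ∧ t = breakpoint a b xbar j i} ∩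
        Set.Icc l u) ∪ {l, u, xbar j},
      ∀ xhat ∈ Set.Icc l u, score a b w xbar j xhat ≤ score a b w xbar j z := by
  classical
  set C : Finset ℝ :=
    (((Finset.univ.filter (fun i : Fin m => a i j ≠ 0)).image (breakpoint a b xbar j)).filter
      (fun t => l ≤ t ∧ t ≤ u)) ∪ {l, u, xbar j} with hC
  have hlC : l ∈ C := by simp [hC]
  have huC : u ∈ C := by simp [hC]
  have hxC : xbar j ∈ C := by simp [hC]
  have hCsub : ∀ y ∈ C, l ≤ y ∧ y ≤ u := by
    intro y hy
    simp only [hC, Finset.mem_union, Finset.mem_filter, Finset.mem_insert,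
      Finset.mem_singleton] at hy
    rcases hy with ⟨_, hy⟩ | (rfl | rfl | rfl)
    · exact hy
    · exact ⟨le_refl _, hlu⟩
    · exact ⟨hlu, le_refl _⟩
    · exact ⟨hl, hu⟩
  have hbpC : ∀ i : Fin m, a i j ≠ 0 → breakpoint a b xbar j i ∈ Set.Icc l u →
      breakpoint a b xbar j i ∈ C := by
    intro i hA hIcc
    simp only [hC, Finset.mem_union, Finset.mem_filter, Finset.mem_image,
      Finset.mem_univ, true_and]
    exact Or.inl ⟨⟨i, by simp [hA], rfl⟩, hIcc.1, hIcc.2⟩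
  have key : ∀ xhat ∈ Set.Icc l u, ∃ e ∈ C,
      score a b w xbar j xhat ≤ score a b w xbar j e := by
    intro xhat hxhat
    by_cases hxin : xhat ∈ C
    · exact ⟨xhat, hxin, le_refl _⟩
    have main : ∀ e ∈ C, e ≠ xbar j →
        (∀ y ∈ C, ¬ ((e < y ∧ y < xhat) ∨ (xhat < y ∧ y < e))) →
        score a b w xbar j xhat ≤ score a b w xbar j e := by
      intro e heC hexbar hbet
      unfold score
      apply Finset.sum_le_sum
      intro i _
      by_cases hA : a i j = 0
      · have hme : movedActivity a xbar j i xhat = movedActivity a xbar j i e := by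
          simp [movedActivity, hA]
        unfold penalty
        rw [hme]
      · set t := breakpoint a b xbar j i with ht
        have hat : a i j * t = b i - ∑ k ∈ Finset.univ.erase j, a i k * xbar k := by
          rw [ht]; unfold breakpoint; field_simp
        have hyb : ∀ s : ℝ, movedActivity a xbar j i s - b i = a i j * (s - t) := by
          intro s; unfold movedActivity; rw [mul_sub, hat]; ring
        have hyy : ∀ s : ℝ, movedActivity a xbar j i s - activity a xbar i
            = a i j * (s - xbar j) := by
          intro s
          unfold movedActivity activity
          rw [← Finset.sum_erase_add Finset.univ (fun k => a i k * xbar k) (Finset.mem_univ j)]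
          ring
        by_cases hYe : movedActivity a xbar j i e ≤ b i
        · exact penalty_le_of_moved_le a b w xbar j i (hw i) e xhat hYe
        · push_neg at hYe
          have h0 : 0 < a i j * (e - t) := by rw [← hyb e]; linarith
          have het : e ≠ t := by
            intro hh; rw [hh] at h0; simp at h0
          have htx : t ≠ xhat := by
            intro hh
            have hbpIcc : breakpoint a b xbar j i ∈ Set.Icc l u := by
              rw [← ht, hh]; exact hxhat
            have hmem := hbpC i hA hbpIcc
            rw [← ht, hh] at hmem
            exact hxin hmem
          have htnb : ¬ ((e < t ∧ t < xhat) ∨ (xhat < t ∧ t < e)) := by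
            intro hcase
            have htI : t ∈ Set.Icc l u := by
              rcases hcase with ⟨h1, h2⟩ | ⟨h1, h2⟩
              · exact ⟨le_trans (hCsub e heC).1 (le_of_lt h1),
                  le_of_lt (lt_of_lt_of_le h2 hxhat.2)⟩
              · exact ⟨le_trans hxhat.1 (le_of_lt h1),
                  le_trans (le_of_lt h2) (hCsub e heC).2⟩
            exact hbet t (hbpC i hA htI) hcase
          have hside_t : (t < e ∧ t < xhat) ∨ (e < t ∧ xhat < t) := by
            rcases lt_trichotomy t e with h1 | h1 | h1 <;>
              rcases lt_trichotomy t xhat with h2 | h2 | h2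
            · exact Or.inl ⟨h1, h2⟩
            · exact absurd h2 htx
            · exact absurd (Or.inr ⟨h2, h1⟩) htnb
            · exact absurd h1.symm het
            · exact absurd h1.symm het
            · exact absurd h1.symm het
            · exact absurd (Or.inl ⟨h1, h2⟩) htnb
            · exact absurd h2 htx
            · exact Or.inr ⟨h1, h2⟩
          have hxbx : xbar j ≠ xhat := fun hh => hxin (hh ▸ hxC)
          have hxbe : e ≠ xbar j := hexbar
          have hxnb : ¬ ((e < xbar j ∧ xbar j < xhat) ∨ (xhat < xbar j ∧ xbar j < e)) :=
            hbet (xbar j) hxC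
          have hside_x : (xbar j < e ∧ xbar j < xhat) ∨ (e < xbar j ∧ xhat < xbar j) := by
            rcases lt_trichotomy (xbar j) e with h1 | h1 | h1 <;>
              rcases lt_trichotomy (xbar j) xhat with h2 | h2 | h2
            · exact Or.inl ⟨h1, h2⟩
            · exact absurd h2 hxbx
            · exact absurd (Or.inr ⟨h2, h1⟩) hxnb
            · exact absurd h1.symm hxbe
            · exact absurd h1.symm hxbe
            · exact absurd h1.symm hxbe
            · exact absurd (Or.inl ⟨h1, h2⟩) hxnb
            · exact absurd h2 hxbx
            · exact Or.inr ⟨h1, h2⟩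
          have i1 : b i < movedActivity a xbar j i xhat ↔ b i < movedActivity a xbar j i e := by
            have e1 := hyb xhat
            have e2 := hyb e
            have hsg : 0 < a i j * (xhat - t) ↔ 0 < a i j * (e - t) := by
              refine sign_pos_iff _ _ _ ?_
              rcases hside_t with ⟨h1, h2⟩ | ⟨h1, h2⟩
              · exact Or.inl ⟨by linarith, by linarith⟩
              · exact Or.inr ⟨by linarith, by linarith⟩
            constructor
            · intro hh; have := hsg.mp (by linarith); linarith
            · intro hh; have := hsg.mpr (by linarith); linarith
          have i2 : movedActivity a xbar j i xhat < activity a xbar i ↔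
              movedActivity a xbar j i e < activity a xbar i := by
            have e1 := hyy xhat
            have e2 := hyy e
            have hsg : a i j * (xhat - xbar j) < 0 ↔ a i j * (e - xbar j) < 0 := by
              refine sign_neg_iff _ _ _ ?_
              rcases hside_x with ⟨h1, h2⟩ | ⟨h1, h2⟩
              · exact Or.inl ⟨by linarith, by linarith⟩
              · exact Or.inr ⟨by linarith, by linarith⟩
            constructor
            · intro hh; have := hsg.mp (by linarith); linarith
            · intro hh; have := hsg.mpr (by linarith); linarith
          have i3 : activity a xbar i < movedActivity a xbar j i xhat ↔
              activity a xbar i < movedActivity a xbar j i e := by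
            have e1 := hyy xhat
            have e2 := hyy e
            have hsg : 0 < a i j * (xhat - xbar j) ↔ 0 < a i j * (e - xbar j) := by
              refine sign_pos_iff _ _ _ ?_
              rcases hside_x with ⟨h1, h2⟩ | ⟨h1, h2⟩
              · exact Or.inl ⟨by linarith, by linarith⟩
              · exact Or.inr ⟨by linarith, by linarith⟩
            constructor
            · intro hh; have := hsg.mp (by linarith); linarith
            · intro hh; have := hsg.mpr (by linarith); linarith
          exact le_of_eq (penalty_congr a b w xbar j i xhat e i1 i2 i3)
    have hlx : l < xhat := lt_of_le_of_ne hxhat.1 (fun hh => hxin (hh ▸ hlC))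
    have hxu : xhat < u := lt_of_le_of_ne hxhat.2 (fun hh => hxin (hh.symm ▸ huC))
    have hClne : (C.filter (fun y => y < xhat)).Nonempty :=
      ⟨l, Finset.mem_filter.mpr ⟨hlC, hlx⟩⟩
    obtain ⟨c, hcmem, hcmax'⟩ : ∃ c ∈ C.filter (fun y => y < xhat),
        ∀ y ∈ C.filter (fun y => y < xhat), y ≤ c :=
      ⟨_, Finset.max'_mem _ hClne, fun y hy => Finset.le_max' _ y hy⟩
    rw [Finset.mem_filter] at hcmem
    have hcC : c ∈ C ∧ c < xhat := hcmem
    have hcmax : ∀ y ∈ C, y < xhat → y ≤ c := fun y hy hyx =>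
      hcmax' y (Finset.mem_filter.mpr ⟨hy, hyx⟩)
    have hCune : (C.filter (fun y => xhat < y)).Nonempty :=
      ⟨u, Finset.mem_filter.mpr ⟨huC, hxu⟩⟩
    obtain ⟨d, hdmem, hdmin'⟩ : ∃ d ∈ C.filter (fun y => xhat < y),
        ∀ y ∈ C.filter (fun y => xhat < y), d ≤ y :=
      ⟨_, Finset.min'_mem _ hCune, fun y hy => Finset.min'_le _ y hy⟩
    rw [Finset.mem_filter] at hdmem
    have hdC : d ∈ C ∧ xhat < d := hdmem
    have hdmin : ∀ y ∈ C, xhat < y → d ≤ y := fun y hy hyx =>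
      hdmin' y (Finset.mem_filter.mpr ⟨hy, hyx⟩)
    by_cases hce : c = xbar j
    · refine ⟨d, hdC.1, main d hdC.1 ?_ ?_⟩
      · intro hh
        have : xbar j < xhat := by rw [← hce]; exact hcC.2
        rw [hh] at hdC
        linarith [hdC.2]
      · intro y hy hcase
        rcases hcase with ⟨h1, h2⟩ | ⟨h1, h2⟩
        · linarith [hdC.2]
        · have := hdmin y hy h1; linarith
    · refine ⟨c, hcC.1, main c hcC.1 hce ?_⟩
      intro y hy hcase
      rcases hcase with ⟨h1, h2⟩ | ⟨h1, h2⟩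
      · have := hcmax y hy h2; linarith
      · linarith [hcC.2]
  obtain ⟨z, hzC, hzmax⟩ := Finset.exists_max_image C (score a b w xbar j) ⟨l, hlC⟩
  refine ⟨z, ?_, ?_⟩
  · simp only [hC, Finset.mem_union, Finset.mem_filter, Finset.mem_image,
      Finset.mem_univ, true_and, Finset.mem_insert, Finset.mem_singleton] at hzC
    simp only [Set.mem_union, Set.mem_inter_iff, Set.mem_setOf_eq, Set.mem_Icc,
      Set.mem_insert_iff, Set.mem_singleton_iff]
    rcases hzC with ⟨⟨i, hA, hbp⟩, h1, h2⟩ | h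
    · exact Or.inl ⟨⟨i, hA, hbp.symm⟩, h1, h2⟩
    · exact Or.inr h
  · intro xhat hxhat
    obtain ⟨e, heC, hle⟩ := key xhat hxhat
    exact le_trans hle (hzmax e heC)
end

section
/- Finite candidate set for the integer best shift move: let l_j ≤ u_j be variable bounds, suppose x̄_j is an integer with l_j ≤ x̄_j ≤ u_j, and let F_ℤ := (({⌊t_{ij}⌋ : a_{ij} > 0} ∪ {⌈t_{ij}⌉ : a_{ij} < 0}) ∩ [l_j, u_j]) ∪ {⌈l_j⌉, ⌊u_j⌋, x̄_j}. Then the score attains its maximum over the integers in [l_j, u_j] at a point of F_ℤ; that is, there exists z ∈ F_ℤ such that s_j(z, x̄) ≥ s_j(x̂_j, x̄) for every integer x̂_j ∈ [l_j, u_j]. -/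
open Finset

variable {m n : ℕ} (a : Fin m → Fin n → ℝ) (b w : Fin m → ℝ) (xbar : Fin n → ℝ) (j : Fin n) (i : Fin m)

lemma activity_eq : activity a xbar i
    = (∑ k ∈ Finset.univ.erase j, a i k * xbar k) + a i j * xbar j := by
  rw [activity, ← Finset.sum_erase_add _ _ (Finset.mem_univ j)]

lemma penalty_eq_zero_feas (h1 : activity a xbar i ≤ b i)
    (h2 : movedActivity a xbar j i x ≤ b i) : penalty a b w xbar j i x = 0 := by
  unfold penalty
  rw [if_neg (by push_neg; intro h; linarith), if_neg (by push_neg; intro h; linarith),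
    if_neg (by push_neg; intro h; linarith), if_neg (by push_neg; intro h; linarith)]

lemma penalty_eq_neg_w (h1 : activity a xbar i ≤ b i)
    (h2 : b i < movedActivity a xbar j i x) : penalty a b w xbar j i x = -w i := by
  unfold penalty
  rw [if_pos ⟨h1, h2⟩]

lemma penalty_eq_w (h1 : b i < activity a xbar i)
    (h2 : movedActivity a xbar j i x ≤ b i) : penalty a b w xbar j i x = w i := by
  unfold penalty
  rw [if_neg (by push_neg; intro h; linarith), if_pos ⟨h1, h2⟩]

lemma penalty_eq_half (h1 : b i < activity a xbar i)
    (h2 : b i < movedActivity a xbar j i x)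
    (h3 : movedActivity a xbar j i x < activity a xbar i) :
    penalty a b w xbar j i x = w i / 2 := by
  unfold penalty
  rw [if_neg (by push_neg; intro h; linarith), if_neg (by push_neg; intro h; linarith),
    if_pos ⟨h1, h2, h3⟩]

lemma penalty_eq_neg_half (h1 : b i < activity a xbar i)
    (h3 : activity a xbar i < movedActivity a xbar j i x) :
    penalty a b w xbar j i x = -w i / 2 := by
  unfold penalty
  rw [if_neg (by push_neg; intro h; linarith), if_neg (by push_neg; intro h; linarith),
    if_neg (by push_neg; intro _ h; linarith), if_pos ⟨h1, by linarith, h3⟩]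

lemma neg_w_le_penalty (hw : 0 ≤ w i) : -w i ≤ penalty a b w xbar j i x := by
  unfold penalty
  split_ifs <;> linarith

lemma penalty_step_right (hw : 0 ≤ w i) (x : ℤ) (hx : xbar j < (x : ℝ))
    (hbp : 0 < a i j → (x : ℝ) ≠ (⌊breakpoint a b xbar j i⌋ : ℝ)) :
    penalty a b w xbar j i (x : ℝ) ≤ penalty a b w xbar j i ((x : ℝ) + 1) := by
  set c := ∑ k ∈ Finset.univ.erase j, a i k * xbar k with hc
  have hact : activity a xbar i = c + a i j * xbar j := activity_eq a xbar j i
  have hmv : ∀ s : ℝ, movedActivity a xbar j i s = c + a i j * s := fun s => rfl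
  rcases lt_trichotomy (a i j) 0 with hA | hA | hA
  · -- a i j < 0 : moved activity decreases, penalty nondecreasing to the right
    have hdec : movedActivity a xbar j i ((x : ℝ) + 1) < movedActivity a xbar j i (x : ℝ) := by
      rw [hmv, hmv]; nlinarith
    rcases le_or_gt (activity a xbar i) (b i) with hb | hb
    · rcases le_or_gt (movedActivity a xbar j i (x : ℝ)) (b i) with h | h
      · rw [penalty_eq_zero_feas a b w xbar j i hb h,
          penalty_eq_zero_feas a b w xbar j i hb (by linarith)]
      · rw [penalty_eq_neg_w a b w xbar j i hb h]
        exact neg_w_le_penalty a b w xbar j i hw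
    · have hylt : movedActivity a xbar j i (x : ℝ) < activity a xbar i := by
        rw [hmv, hact]; nlinarith
      rcases le_or_gt (movedActivity a xbar j i (x : ℝ)) (b i) with h | h
      · rw [penalty_eq_w a b w xbar j i hb h,
          penalty_eq_w a b w xbar j i hb (by linarith)]
      · rw [penalty_eq_half a b w xbar j i hb h (by linarith)]
        rcases le_or_gt (movedActivity a xbar j i ((x : ℝ) + 1)) (b i) with h2 | h2
        · rw [penalty_eq_w a b w xbar j i hb h2]; linarith
        · rw [penalty_eq_half a b w xbar j i hb h2 (by linarith)]
  · -- a i j = 0 : nothing changes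
    have : movedActivity a xbar j i (x : ℝ) = movedActivity a xbar j i ((x : ℝ) + 1) := by
      rw [hmv, hmv, hA]; ring
    unfold penalty
    rw [this]
  · -- a i j > 0
    have hinc : movedActivity a xbar j i (x : ℝ) < movedActivity a xbar j i ((x : ℝ) + 1) := by
      rw [hmv, hmv]; nlinarith
    rcases le_or_gt (activity a xbar i) (b i) with hb | hb
    · rcases le_or_gt (movedActivity a xbar j i (x : ℝ)) (b i) with h | h
      · -- x ≤ t, and x ≠ ⌊t⌋ so x+1 ≤ t as well
        have ht : (x : ℝ) ≤ breakpoint a b xbar j i := by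
          rw [breakpoint, le_div_iff₀ hA]
          rw [hmv] at h; linarith [mul_comm (a i j) (x : ℝ)]
        have hxle : x ≤ ⌊breakpoint a b xbar j i⌋ := Int.le_floor.mpr ht
        have hxne : x ≠ ⌊breakpoint a b xbar j i⌋ := by
          intro hxeq
          exact hbp hA (by exact_mod_cast congrArg (fun z : ℤ => (z : ℝ)) hxeq)
        have hx1 : (x : ℝ) + 1 ≤ breakpoint a b xbar j i := by
          have : x + 1 ≤ ⌊breakpoint a b xbar j i⌋ := by omega
          calc ((x : ℝ) + 1) = ((x + 1 : ℤ) : ℝ) := by push_cast; ring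
            _ ≤ (⌊breakpoint a b xbar j i⌋ : ℝ) := by exact_mod_cast this
            _ ≤ breakpoint a b xbar j i := Int.floor_le _
        have hbpid : a i j * breakpoint a b xbar j i = b i - c := by
          rw [breakpoint, ← hc, mul_comm, div_mul_cancel₀ _ (ne_of_gt hA)]
        have h2 : movedActivity a xbar j i ((x : ℝ) + 1) ≤ b i := by
          rw [hmv]; nlinarith
        rw [penalty_eq_zero_feas a b w xbar j i hb h,
          penalty_eq_zero_feas a b w xbar j i hb h2]
      · rw [penalty_eq_neg_w a b w xbar j i hb h]
        exact neg_w_le_penalty a b w xbar j i hw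
    · -- infeasible and to the right of xbar: both penalties are -w/2
      have h1 : activity a xbar i < movedActivity a xbar j i (x : ℝ) := by
        rw [hmv, hact]; nlinarith
      rw [penalty_eq_neg_half a b w xbar j i hb h1,
        penalty_eq_neg_half a b w xbar j i hb (by linarith)]

lemma penalty_step_left (hw : 0 ≤ w i) (x : ℤ) (hx : (x : ℝ) < xbar j)
    (hbp : a i j < 0 → (x : ℝ) ≠ (⌈breakpoint a b xbar j i⌉ : ℝ)) :
    penalty a b w xbar j i (x : ℝ) ≤ penalty a b w xbar j i ((x : ℝ) - 1) := by
  set c := ∑ k ∈ Finset.univ.erase j, a i k * xbar k with hc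
  have hact : activity a xbar i = c + a i j * xbar j := activity_eq a xbar j i
  have hmv : ∀ s : ℝ, movedActivity a xbar j i s = c + a i j * s := fun s => rfl
  rcases lt_trichotomy (a i j) 0 with hA | hA | hA
  · -- a i j < 0 : moved activity increases moving left
    have hinc : movedActivity a xbar j i (x : ℝ) < movedActivity a xbar j i ((x : ℝ) - 1) := by
      rw [hmv, hmv]; nlinarith
    rcases le_or_gt (activity a xbar i) (b i) with hb | hb
    · rcases le_or_gt (movedActivity a xbar j i (x : ℝ)) (b i) with h | h
      · -- y(x) ≤ b means x ≥ t, and x ≠ ⌈t⌉ so x - 1 ≥ t too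
        have ht : breakpoint a b xbar j i ≤ (x : ℝ) := by
          rw [breakpoint, div_le_iff_of_neg hA]
          rw [hmv] at h; linarith [mul_comm (a i j) (x : ℝ)]
        have hxge : ⌈breakpoint a b xbar j i⌉ ≤ x := Int.ceil_le.mpr ht
        have hxne : x ≠ ⌈breakpoint a b xbar j i⌉ := by
          intro hxeq
          exact hbp hA (by exact_mod_cast congrArg (fun z : ℤ => (z : ℝ)) hxeq)
        have hx1 : breakpoint a b xbar j i ≤ (x : ℝ) - 1 := by
          have h' : ⌈breakpoint a b xbar j i⌉ ≤ x - 1 := by omega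
          calc breakpoint a b xbar j i ≤ (⌈breakpoint a b xbar j i⌉ : ℝ) := Int.le_ceil _
            _ ≤ ((x - 1 : ℤ) : ℝ) := by exact_mod_cast h'
            _ = (x : ℝ) - 1 := by push_cast; ring
        have hbpid : a i j * breakpoint a b xbar j i = b i - c := by
          rw [breakpoint, ← hc, mul_comm, div_mul_cancel₀ _ (ne_of_lt hA)]
        have h2 : movedActivity a xbar j i ((x : ℝ) - 1) ≤ b i := by
          rw [hmv]; nlinarith
        rw [penalty_eq_zero_feas a b w xbar j i hb h,
          penalty_eq_zero_feas a b w xbar j i hb h2]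
      · rw [penalty_eq_neg_w a b w xbar j i hb h]
        exact neg_w_le_penalty a b w xbar j i hw
    · -- infeasible, a < 0, x < xbar : y(x) > ȳ, both penalties -w/2
      have h1 : activity a xbar i < movedActivity a xbar j i (x : ℝ) := by
        rw [hmv, hact]; nlinarith
      rw [penalty_eq_neg_half a b w xbar j i hb h1,
        penalty_eq_neg_half a b w xbar j i hb (by linarith)]
  · have : movedActivity a xbar j i (x : ℝ) = movedActivity a xbar j i ((x : ℝ) - 1) := by
      rw [hmv, hmv, hA]; ring
    unfold penalty
    rw [this]
  · -- a i j > 0 : moved activity decreases moving left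
    have hdec : movedActivity a xbar j i ((x : ℝ) - 1) < movedActivity a xbar j i (x : ℝ) := by
      rw [hmv, hmv]; nlinarith
    rcases le_or_gt (activity a xbar i) (b i) with hb | hb
    · rcases le_or_gt (movedActivity a xbar j i (x : ℝ)) (b i) with h | h
      · rw [penalty_eq_zero_feas a b w xbar j i hb h,
          penalty_eq_zero_feas a b w xbar j i hb (by linarith)]
      · rw [penalty_eq_neg_w a b w xbar j i hb h]
        exact neg_w_le_penalty a b w xbar j i hw
    · have hylt : movedActivity a xbar j i (x : ℝ) < activity a xbar i := by
        rw [hmv, hact]; nlinarith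
      rcases le_or_gt (movedActivity a xbar j i (x : ℝ)) (b i) with h | h
      · rw [penalty_eq_w a b w xbar j i hb h,
          penalty_eq_w a b w xbar j i hb (by linarith)]
      · rw [penalty_eq_half a b w xbar j i hb h (by linarith)]
        rcases le_or_gt (movedActivity a xbar j i ((x : ℝ) - 1)) (b i) with h2 | h2
        · rw [penalty_eq_w a b w xbar j i hb h2]; linarith
        · rw [penalty_eq_half a b w xbar j i hb h2 (by linarith)]

/-- Finite candidate set for the integer best shift move: the score attains its maximum
over the integers in `[l, u]` at a rounded breakpoint within the bounds, at a rounded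
bound, or at the (integral) incumbent. -/
theorem best_integer_shift_attained_on_candidate_set
    {m n : ℕ} (a : Fin m → Fin n → ℝ) (b w : Fin m → ℝ)
    (xbar : Fin n → ℝ) (j : Fin n) (hw : ∀ i, 0 ≤ w i)
    (l u : ℝ) (hlu : l ≤ u) (hint : ∃ k : ℤ, xbar j = (k : ℝ))
    (hl : l ≤ xbar j) (hu : xbar j ≤ u) :
    ∃ z ∈ (({t : ℝ | ∃ i : Fin m, a i j > 0 ∧ t = (⌊breakpoint a b xbar j i⌋ : ℝ)} ∪
          {t : ℝ | ∃ i : Fin m, a i j < 0 ∧ t = (⌈breakpoint a b xbar j i⌉ : ℝ)}) ∩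
        Set.Icc l u) ∪ {(⌈l⌉ : ℝ), (⌊u⌋ : ℝ), xbar j},
      ∀ xhat : ℝ, (∃ k : ℤ, xhat = (k : ℝ)) → xhat ∈ Set.Icc l u →
        score a b w xbar j xhat ≤ score a b w xbar j z := by
  obtain ⟨k0, hk0⟩ := hint
  set F : Set ℝ := (({t : ℝ | ∃ i : Fin m, a i j > 0 ∧ t = (⌊breakpoint a b xbar j i⌋ : ℝ)} ∪
          {t : ℝ | ∃ i : Fin m, a i j < 0 ∧ t = (⌈breakpoint a b xbar j i⌉ : ℝ)}) ∩
        Set.Icc l u) ∪ {(⌈l⌉ : ℝ), (⌊u⌋ : ℝ), xbar j} with hF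
  have hmemxbar : xbar j ∈ F := Or.inr (by simp)
  have hmeml : ((⌈l⌉ : ℤ) : ℝ) ∈ F := Or.inr (by simp)
  have hmemu : ((⌊u⌋ : ℤ) : ℝ) ∈ F := Or.inr (by simp)
  -- moving right from any non-candidate integer > xbar j
  have keyR : ∀ N : ℕ, ∀ x : ℤ, k0 ≤ x → l ≤ (x : ℝ) → (x : ℝ) ≤ u → (⌊u⌋ - x).toNat ≤ N →
      ∃ z ∈ F, score a b w xbar j (x : ℝ) ≤ score a b w xbar j z := by
    intro N
    induction N with
    | zero =>
      intro x hk hlx hxu hN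
      have hxfl : x ≤ ⌊u⌋ := Int.le_floor.mpr hxu
      have hxeq : x = ⌊u⌋ := by omega
      exact ⟨((⌊u⌋ : ℤ) : ℝ), hmemu, le_of_eq (by rw [hxeq])⟩
    | succ N ih =>
      intro x hk hlx hxu hN
      by_cases hxb : x = k0
      · exact ⟨xbar j, hmemxbar, le_of_eq (by rw [hxb, hk0])⟩
      by_cases hcand : ∃ i, 0 < a i j ∧ (x : ℝ) = (⌊breakpoint a b xbar j i⌋ : ℝ)
      · exact ⟨(x : ℝ), Or.inl ⟨Or.inl hcand, hlx, hxu⟩, le_refl _⟩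
      by_cases hxu' : x = ⌊u⌋
      · exact ⟨((⌊u⌋ : ℤ) : ℝ), hmemu, le_of_eq (by rw [hxu'])⟩
      · have hxlt : x < ⌊u⌋ := lt_of_le_of_ne (Int.le_floor.mpr hxu) hxu'
        have hxgt : xbar j < (x : ℝ) := by
          rw [hk0]; exact_mod_cast lt_of_le_of_ne hk (Ne.symm hxb)
        have hstep : score a b w xbar j (x : ℝ) ≤ score a b w xbar j ((x : ℝ) + 1) :=
          Finset.sum_le_sum fun i _ =>
            penalty_step_right a b w xbar j i (hw i) x hxgt
              (fun hA hEq => hcand ⟨i, hA, hEq⟩)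
        have hcast : ((x + 1 : ℤ) : ℝ) = (x : ℝ) + 1 := by push_cast; ring
        have hxu2 : ((x + 1 : ℤ) : ℝ) ≤ u := by
          calc ((x + 1 : ℤ) : ℝ) ≤ ((⌊u⌋ : ℤ) : ℝ) := by exact_mod_cast hxlt
            _ ≤ u := Int.floor_le u
        obtain ⟨z, hz, hsz⟩ := ih (x + 1) (by omega) (by rw [hcast]; linarith)
          hxu2 (by omega)
        rw [hcast] at hsz
        exact ⟨z, hz, le_trans hstep hsz⟩
  -- moving left from any non-candidate integer < xbar j
  have keyL : ∀ N : ℕ, ∀ x : ℤ, x ≤ k0 → l ≤ (x : ℝ) → (x : ℝ) ≤ u → (x - ⌈l⌉).toNat ≤ N →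
      ∃ z ∈ F, score a b w xbar j (x : ℝ) ≤ score a b w xbar j z := by
    intro N
    induction N with
    | zero =>
      intro x hk hlx hxu hN
      have hxcl : ⌈l⌉ ≤ x := Int.ceil_le.mpr hlx
      have hxeq : x = ⌈l⌉ := by omega
      exact ⟨((⌈l⌉ : ℤ) : ℝ), hmeml, le_of_eq (by rw [hxeq])⟩
    | succ N ih =>
      intro x hk hlx hxu hN
      by_cases hxb : x = k0
      · exact ⟨xbar j, hmemxbar, le_of_eq (by rw [hxb, hk0])⟩
      by_cases hcand : ∃ i, a i j < 0 ∧ (x : ℝ) = (⌈breakpoint a b xbar j i⌉ : ℝ)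
      · refine ⟨(x : ℝ), Or.inl ⟨Or.inr ?_, hlx, hxu⟩, le_refl _⟩
        obtain ⟨i, hi, hxi⟩ := hcand
        exact ⟨i, hi, hxi⟩
      by_cases hxl' : x = ⌈l⌉
      · exact ⟨((⌈l⌉ : ℤ) : ℝ), hmeml, le_of_eq (by rw [hxl'])⟩
      · have hxlt : ⌈l⌉ < x := lt_of_le_of_ne (Int.ceil_le.mpr hlx) (Ne.symm hxl')
        have hxgt : (x : ℝ) < xbar j := by
          rw [hk0]; exact_mod_cast lt_of_le_of_ne hk hxb
        have hstep : score a b w xbar j (x : ℝ) ≤ score a b w xbar j ((x : ℝ) - 1) :=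
          Finset.sum_le_sum fun i _ =>
            penalty_step_left a b w xbar j i (hw i) x hxgt
              (fun hA hEq => hcand ⟨i, hA, hEq⟩)
        have hcast : ((x - 1 : ℤ) : ℝ) = (x : ℝ) - 1 := by push_cast; ring
        have hxl2 : l ≤ ((x - 1 : ℤ) : ℝ) := by
          calc l ≤ ((⌈l⌉ : ℤ) : ℝ) := Int.le_ceil l
            _ ≤ ((x - 1 : ℤ) : ℝ) := by exact_mod_cast (by omega : ⌈l⌉ ≤ x - 1)
        obtain ⟨z, hz, hsz⟩ := ih (x - 1) (by omega) hxl2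
          (by rw [hcast]; linarith) (by omega)
        rw [hcast] at hsz
        exact ⟨z, hz, le_trans hstep hsz⟩
  -- the integer maximizer
  have hk0mem : k0 ∈ Finset.Icc ⌈l⌉ ⌊u⌋ := by
    rw [Finset.mem_Icc]
    constructor
    · exact Int.ceil_le.mpr (hk0 ▸ hl)
    · exact Int.le_floor.mpr (hk0 ▸ hu)
  obtain ⟨x0, hx0mem, hmax⟩ := (Finset.Icc ⌈l⌉ ⌊u⌋).exists_max_image
    (fun z : ℤ => score a b w xbar j (z : ℝ)) ⟨k0, hk0mem⟩
  rw [Finset.mem_Icc] at hx0mem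
  have hx0l : l ≤ (x0 : ℝ) := le_trans (Int.le_ceil l) (by exact_mod_cast hx0mem.1)
  have hx0u : (x0 : ℝ) ≤ u := le_trans (by exact_mod_cast hx0mem.2) (Int.floor_le u)
  have hzex : ∃ z ∈ F, score a b w xbar j (x0 : ℝ) ≤ score a b w xbar j z := by
    rcases le_or_gt k0 x0 with hc | hc
    · exact keyR (⌊u⌋ - x0).toNat x0 hc hx0l hx0u le_rfl
    · exact keyL (x0 - ⌈l⌉).toNat x0 (le_of_lt hc) hx0l hx0u le_rfl
  obtain ⟨z, hzF, hzs⟩ := hzex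
  refine ⟨z, hzF, ?_⟩
  rintro xhat ⟨k, rfl⟩ hmem
  rw [Set.mem_Icc] at hmem
  have hkmem : k ∈ Finset.Icc ⌈l⌉ ⌊u⌋ := by
    rw [Finset.mem_Icc]
    exact ⟨Int.ceil_le.mpr hmem.1, Int.le_floor.mpr hmem.2⟩
  exact le_trans (hmax k hkmem) hzs
end
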